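/- Let a_1,...,a_n be pairwise coprime positive integers with a_1 even, and b_1,...,b_n integers with Σ_i b_i·(a_1···a_n)/a_i = 1 and all a_i - b_i odd. Then for every i = 1,...,n: s((a_1···a_n)/a_i, a_i; 1/2, 1/2) + s(a_i - b_i, 2a_i) + s(b_i, a_i) = 0. -/

import Mathlib

open Finset Real

open Classical in
/-- The sawtooth function: 0 on integers, fractional part minus 1/2 otherwise. -/
noncomputable def saw (x : ℝ) : ℝ :=
  if ∃ n : ℤ, x = n then 0 else Int.fract x - 1/2

lemma saw_int (n : ℤ) : saw (n : ℝ) = 0 := by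
  rw [saw, if_pos ⟨n, rfl⟩]

lemma saw_add_int (x : ℝ) (n : ℤ) : saw (x + n) = saw x := by
  unfold saw
  have h : (∃ m : ℤ, x + n = m) ↔ (∃ m : ℤ, x = m) := by
    constructor
    · rintro ⟨m, hm⟩; exact ⟨m - n, by push_cast; linarith⟩
    · rintro ⟨m, hm⟩; exact ⟨m + n, by push_cast; linarith⟩
  rw [Int.fract_add_intCast]
  by_cases hc : ∃ m : ℤ, x = m
  · rw [if_pos (h.mpr hc), if_pos hc]
  · rw [if_neg (fun c => hc (h.mp c)), if_neg hc]

lemma saw_neg (x : ℝ) : saw (-x) = -saw x := by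
  unfold saw
  have h : (∃ m : ℤ, -x = m) ↔ (∃ m : ℤ, x = m) := by
    constructor
    · rintro ⟨m, hm⟩; exact ⟨-m, by push_cast; linarith⟩
    · rintro ⟨m, hm⟩; exact ⟨-m, by push_cast; linarith⟩
  by_cases hc : ∃ m : ℤ, x = m
  · rw [if_pos (h.mpr hc), if_pos hc]; ring
  · rw [if_neg (fun c => hc (h.mp c)), if_neg hc]
    obtain ⟨m, hm⟩ : ∃ m : ℤ, x = m + Int.fract x := ⟨⌊x⌋, by rw [add_comm, Int.fract_add_floor]⟩
    have h1 : Int.fract x ≠ 0 := fun c => hc ⟨m, by rw [hm, c, add_zero]⟩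
    have h2 : 0 < Int.fract x := lt_of_le_of_ne (Int.fract_nonneg x) (Ne.symm h1)
    have h3 : Int.fract x < 1 := Int.fract_lt_one x
    have : Int.fract (-x) = 1 - Int.fract x := Int.fract_neg h1
    rw [this]; ring

lemma saw_div_congr {m s t : ℤ} (hm : m ≠ 0) (h : m ∣ s - t) : saw ((s:ℝ)/m) = saw ((t:ℝ)/m) := by
  obtain ⟨k, hk⟩ := h
  have hs : s = t + m * k := by linarith
  have : (s:ℝ)/m = (t:ℝ)/m + k := by
    rw [hs]; push_cast
    field_simp
  rw [this, saw_add_int]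

lemma sum_range_double (p : ℕ) (f : ℕ → ℝ) :
    ∑ μ ∈ Finset.range (2*p), f μ = ∑ ν ∈ Finset.range p, f (2*ν) + ∑ ν ∈ Finset.range p, f (2*ν+1) := by
  induction p with
  | zero => simp
  | succ p ih =>
    rw [Finset.sum_range_succ, Finset.sum_range_succ, show 2*(p+1) = (2*p)+1+1 by ring,
      Finset.sum_range_succ, Finset.sum_range_succ, ih]
    ring

/-- The Dedekind sum s(q,p). -/
noncomputable def dedekindSum (q : ℤ) (p : ℕ) : ℝ :=
  ∑ μ ∈ Finset.range p, saw ((μ : ℝ) / p) * saw ((q : ℝ) * μ / p)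

/-- The Dedekind–Rademacher sum s(q,p;x,y). -/
noncomputable def drSum (q : ℤ) (p : ℕ) (x y : ℝ) : ℝ :=
  ∑ μ ∈ Finset.range p, saw (((μ : ℝ) + y) / p) * saw ((q : ℝ) * ((μ : ℝ) + y) / p + x)

lemma dedekindSum_congr {p : ℕ} (hp : p ≠ 0) {q q' : ℤ} (h : (p:ℤ) ∣ q - q') :
    dedekindSum q p = dedekindSum q' p := by
  unfold dedekindSum
  refine Finset.sum_congr rfl fun μ _ => ?_
  congr 1
  have h1 : (q:ℝ) * μ / p = ((q*μ : ℤ):ℝ)/(((p:ℤ)):ℝ) := by push_cast; ring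
  have h2 : (q':ℝ) * μ / p = ((q'*μ : ℤ):ℝ)/(((p:ℤ)):ℝ) := by push_cast; ring
  rw [h1, h2]
  refine saw_div_congr (by exact_mod_cast hp) ?_
  have : q*μ - q'*μ = (q - q')*μ := by ring
  rw [this]
  exact h.mul_right _

lemma dedekindSum_neg (q : ℤ) (p : ℕ) : dedekindSum (-q) p = - dedekindSum q p := by
  unfold dedekindSum
  rw [← Finset.sum_neg_distrib]
  refine Finset.sum_congr rfl fun μ _ => ?_
  have h1 : ((-q : ℤ):ℝ) * μ / p = -((q:ℝ)*μ/p) := by push_cast; ring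
  rw [h1, saw_neg]; ring

lemma drSum_half_neg {p : ℕ} (hp : p ≠ 0) (q : ℤ) :
    drSum (-q) p (1/2) (1/2) = - drSum q p (1/2) (1/2) := by
  unfold drSum
  rw [← Finset.sum_range_reflect, ← Finset.sum_neg_distrib]
  refine Finset.sum_congr rfl fun ν hν => ?_
  have hν' : ν < p := Finset.mem_range.mp hν
  have hpr : (p:ℝ) ≠ 0 := Nat.cast_ne_zero.mpr hp
  have hc : ((p - 1 - ν : ℕ) : ℝ) = (p:ℝ) - (1 + ν) := by
    rw [show p - 1 - ν = p - (1+ν) by omega, Nat.cast_sub (by omega)]; push_cast; ring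
  rw [hc]
  have e1 : ((p:ℝ) - (1+ν) + 1/2)/p = -(((ν:ℝ)+1/2)/p) + ((1:ℤ):ℝ) := by
    push_cast; field_simp; ring
  have e2 : ((-q : ℤ):ℝ) * ((p:ℝ) - (1+ν) + 1/2)/p + 1/2
      = ((q:ℝ)*((ν:ℝ)+1/2)/p + 1/2) + ((-q:ℤ):ℝ) := by
    push_cast; field_simp; ring
  rw [e1, e2, saw_add_int, saw_add_int, saw_neg]; ring

lemma dedekind_split {p : ℕ} (hp : p ≠ 0) (b : ℤ) :
    dedekindSum ((p:ℤ) - b) (2*p) = - dedekindSum b p - drSum b p (1/2) (1/2) := by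
  have hpr : (p:ℝ) ≠ 0 := Nat.cast_ne_zero.mpr hp
  have h2p : (2*(p:ℤ)) ≠ 0 := by positivity
  have hsplit : dedekindSum ((p:ℤ) - b) (2*p)
      = ∑ ν ∈ Finset.range p, saw (((2*ν : ℕ) : ℝ) / ((2*p : ℕ):ℝ))
          * saw ((((p:ℤ) - b : ℤ):ℝ) * ((2*ν : ℕ):ℝ) / ((2*p : ℕ):ℝ))
      + ∑ ν ∈ Finset.range p, saw (((2*ν+1 : ℕ) : ℝ) / ((2*p : ℕ):ℝ))
          * saw ((((p:ℤ) - b : ℤ):ℝ) * ((2*ν+1 : ℕ):ℝ) / ((2*p : ℕ):ℝ)) := by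
    unfold dedekindSum
    rw [sum_range_double]
  have heven : ∑ ν ∈ Finset.range p, saw (((2*ν : ℕ) : ℝ) / ((2*p : ℕ):ℝ))
      * saw ((((p:ℤ) - b : ℤ):ℝ) * ((2*ν : ℕ):ℝ) / ((2*p : ℕ):ℝ))
      = - dedekindSum b p := by
    unfold dedekindSum
    rw [← Finset.sum_neg_distrib]
    refine Finset.sum_congr rfl fun ν _ => ?_
    have e1 : ((2*ν : ℕ) : ℝ) / ((2*p : ℕ):ℝ) = (ν:ℝ)/p := by push_cast; field_simp
    have e2 : (((p:ℤ) - b : ℤ):ℝ) * ((2*ν : ℕ):ℝ) / ((2*p : ℕ):ℝ)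
        = ((((p:ℤ) - b)*ν : ℤ):ℝ)/(((p:ℤ)):ℝ) := by push_cast; field_simp
    rw [e1, e2]
    have e3 : saw (((((p:ℤ) - b)*ν : ℤ):ℝ)/(((p:ℤ)):ℝ)) = saw ((((-b)*ν : ℤ):ℝ)/(((p:ℤ)):ℝ)) := by
      refine saw_div_congr (by exact_mod_cast hp) ?_
      exact ⟨ν, by ring⟩
    rw [e3]
    have e4 : (((-b)*ν : ℤ):ℝ)/(((p:ℤ)):ℝ) = -((b:ℝ)*ν/p) := by push_cast; ring
    rw [e4, saw_neg]; ring
  have hodd : ∑ ν ∈ Finset.range p, saw (((2*ν+1 : ℕ) : ℝ) / ((2*p : ℕ):ℝ))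
      * saw ((((p:ℤ) - b : ℤ):ℝ) * ((2*ν+1 : ℕ):ℝ) / ((2*p : ℕ):ℝ))
      = drSum (-b) p (1/2) (1/2) := by
    unfold drSum
    refine Finset.sum_congr rfl fun ν _ => ?_
    have e1 : ((2*ν+1 : ℕ) : ℝ) / ((2*p : ℕ):ℝ) = ((ν:ℝ)+1/2)/p := by
      push_cast; rw [div_eq_div_iff (by exact mul_ne_zero two_ne_zero hpr) hpr]; ring
    have e2 : (((p:ℤ) - b : ℤ):ℝ) * ((2*ν+1 : ℕ):ℝ) / ((2*p : ℕ):ℝ)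
        = (((((p:ℤ) - b))*(2*ν+1) : ℤ):ℝ)/((2*(p:ℤ) : ℤ):ℝ) := by
      push_cast
      all_goals rw [div_eq_div_iff (by exact mul_ne_zero two_ne_zero hpr) (by exact mul_ne_zero two_ne_zero hpr)]
      all_goals ring
    have e3 : saw ((((((p:ℤ) - b))*(2*ν+1) : ℤ):ℝ)/((2*(p:ℤ) : ℤ):ℝ))
        = saw ((((-b)*(2*ν+1) + p : ℤ):ℝ)/((2*(p:ℤ) : ℤ):ℝ)) := by
      refine saw_div_congr h2p ⟨ν, by ring⟩
    have e4 : (((-b)*(2*ν+1) + p : ℤ):ℝ)/((2*(p:ℤ) : ℤ):ℝ)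
        = ((-b : ℤ):ℝ)*((ν:ℝ)+1/2)/p + 1/2 := by push_cast; field_simp
    rw [e1, e2, e3, e4]
  rw [hsplit, heven, hodd, drSum_half_neg hp]
  ring

lemma mod_facts (p : ℕ) (hp : p ≠ 0) (q b : ℤ)
    (h3 : ∀ t : ℤ, Odd t → Odd (q*t+p))
    (h1 : ∀ t : ℤ, Odd t → (2*(p:ℤ)) ∣ (b*(q*t+p) + p - t))
    (μ : ℕ) (hμ : μ < p) :
    Odd ((q*(2*(μ:ℤ)+1)+p) % (2*(p:ℤ)))
    ∧ 0 ≤ (q*(2*(μ:ℤ)+1)+p) % (2*(p:ℤ))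
    ∧ (q*(2*(μ:ℤ)+1)+p) % (2*(p:ℤ)) < 2*(p:ℤ)
    ∧ (2*(p:ℤ)) ∣ (q*(2*(μ:ℤ)+1)+p - (q*(2*(μ:ℤ)+1)+p) % (2*(p:ℤ)))
    ∧ (2*(p:ℤ)) ∣ (b*((q*(2*(μ:ℤ)+1)+p) % (2*(p:ℤ)))+p - (2*(μ:ℤ)+1)) := by
  have hp2 : (0:ℤ) < 2*(p:ℤ) := by positivity
  set t : ℤ := 2*(μ:ℤ)+1 with htdef
  have ht : Odd t := ⟨μ, by ring⟩
  set u : ℤ := (q*t+p) % (2*(p:ℤ)) with hudef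
  have hdvd : (2*(p:ℤ)) ∣ (q*t+p - u) := ⟨(q*t+p)/(2*(p:ℤ)), by rw [hudef, Int.emod_def]; ring⟩
  have hu0 : 0 ≤ u := Int.emod_nonneg _ (by omega)
  have hu2 : u < 2*(p:ℤ) := Int.emod_lt_of_pos _ hp2
  have huodd : Odd u := by
    have h2 : (2:ℤ) ∣ (q*t+p - u) := dvd_trans ⟨(p:ℤ), by ring⟩ hdvd
    have := h3 t ht
    rw [Int.odd_iff] at this ⊢
    omega
  refine ⟨huodd, hu0, hu2, hdvd, ?_⟩
  have key := dvd_sub (h1 t ht) (hdvd.mul_left b)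
  convert key using 1
  exacts [rfl, by ring]

lemma drSum_inv {p : ℕ} (hp : p ≠ 0) (q b : ℤ)
    (h3 : ∀ t : ℤ, Odd t → Odd (q*t+p))
    (h4 : ∀ t : ℤ, Odd t → Odd (b*t+p))
    (h1 : ∀ t : ℤ, Odd t → (2*(p:ℤ)) ∣ (b*(q*t+p) + p - t))
    (h2 : ∀ t : ℤ, Odd t → (2*(p:ℤ)) ∣ (q*(b*t+p) + p - t)) :
    drSum q p (1/2) (1/2) = drSum b p (1/2) (1/2) := by
  have hpr : (p:ℝ) ≠ 0 := Nat.cast_ne_zero.mpr hp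
  have h2p : (2*(p:ℤ)) ≠ 0 := by positivity
  unfold drSum
  refine Finset.sum_nbij'
    (i := fun μ => (((q*(2*(μ:ℤ)+1)+p) % (2*(p:ℤ))) / 2).toNat)
    (j := fun ν => (((b*(2*(ν:ℤ)+1)+p) % (2*(p:ℤ))) / 2).toNat) ?_ ?_ ?_ ?_ ?_
  · intro μ hμ
    obtain ⟨ho, hl, hr, -, -⟩ := mod_facts p hp q b h3 h1 μ (Finset.mem_range.mp hμ)
    rw [Int.odd_iff] at ho
    exact Finset.mem_range.mpr (show (((q*(2*(μ:ℤ)+1)+(p:ℤ)) % (2*(p:ℤ))) / 2).toNat < p by omega)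
  · intro ν hν
    obtain ⟨ho, hl, hr, -, -⟩ := mod_facts p hp b q h4 h2 ν (Finset.mem_range.mp hν)
    rw [Int.odd_iff] at ho
    exact Finset.mem_range.mpr (show (((b*(2*(ν:ℤ)+1)+(p:ℤ)) % (2*(p:ℤ))) / 2).toNat < p by omega)
  · intro μ hμ
    obtain ⟨ho, hl, hr, hd4, hd5⟩ := mod_facts p hp q b h3 h1 μ (Finset.mem_range.mp hμ)
    set u : ℤ := (q*(2*(μ:ℤ)+1)+p) % (2*(p:ℤ)) with hudef
    have hcast : (((u / 2).toNat : ℤ)) = u / 2 := Int.toNat_of_nonneg (by omega)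
    have h2u : 2*(((u / 2).toNat : ℤ)) + 1 = u := by
      rw [Int.odd_iff] at ho; omega
    simp only [h2u]
    have hmod : (b*u+p) % (2*(p:ℤ)) = (2*(μ:ℤ)+1) % (2*(p:ℤ)) := by
      refine Int.modEq_iff_dvd.mpr ?_
      rw [show (2*(μ:ℤ)+1) - (b*u+p) = -(b*u+(p:ℤ) - (2*(μ:ℤ)+1)) by ring]
      exact dvd_neg.mpr hd5
    rw [hmod]
    have hlt : (2*(μ:ℤ)+1) % (2*(p:ℤ)) = 2*(μ:ℤ)+1 :=
      Int.emod_eq_of_lt (by omega) (by have := Finset.mem_range.mp hμ; omega)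
    rw [hlt]
    omega
  · intro ν hν
    obtain ⟨ho, hl, hr, hd4, hd5⟩ := mod_facts p hp b q h4 h2 ν (Finset.mem_range.mp hν)
    set u : ℤ := (b*(2*(ν:ℤ)+1)+p) % (2*(p:ℤ)) with hudef
    have h2u : 2*(((u / 2).toNat : ℤ)) + 1 = u := by
      rw [Int.odd_iff] at ho; omega
    simp only [h2u]
    have hmod : (q*u+p) % (2*(p:ℤ)) = (2*(ν:ℤ)+1) % (2*(p:ℤ)) := by
      refine Int.modEq_iff_dvd.mpr ?_
      rw [show (2*(ν:ℤ)+1) - (q*u+p) = -(q*u+(p:ℤ) - (2*(ν:ℤ)+1)) by ring]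
      exact dvd_neg.mpr hd5
    rw [hmod]
    have hlt : (2*(ν:ℤ)+1) % (2*(p:ℤ)) = 2*(ν:ℤ)+1 :=
      Int.emod_eq_of_lt (by omega) (by have := Finset.mem_range.mp hν; omega)
    rw [hlt]
    omega
  · intro μ hμ
    obtain ⟨ho, hl, hr, hd4, hd5⟩ := mod_facts p hp q b h3 h1 μ (Finset.mem_range.mp hμ)
    set u : ℤ := (q*(2*(μ:ℤ)+1)+p) % (2*(p:ℤ)) with hudef
    set ν : ℕ := (u / 2).toNat with hνdef
    have h2u : 2*((ν : ℤ)) + 1 = u := by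
      rw [Int.odd_iff] at ho; omega
    have e1 : ((μ:ℝ)+1/2)/p = ((2*(μ:ℤ)+1 : ℤ):ℝ)/((2*(p:ℤ) : ℤ):ℝ) := by
      push_cast
      all_goals rw [div_eq_div_iff hpr (by exact mul_ne_zero two_ne_zero hpr)]
      all_goals ring
    have e2 : (q:ℝ)*((μ:ℝ)+1/2)/p + 1/2 = ((q*(2*(μ:ℤ)+1)+p : ℤ):ℝ)/((2*(p:ℤ) : ℤ):ℝ) := by
      push_cast
      field_simp
    have e3 : ((ν:ℝ)+1/2)/p = ((u : ℤ):ℝ)/((2*(p:ℤ) : ℤ):ℝ) := by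
      rw [show ((u:ℤ):ℝ) = ((2*(ν:ℤ)+1 : ℤ):ℝ) by rw [h2u]]
      push_cast
      all_goals rw [div_eq_div_iff hpr (by exact mul_ne_zero two_ne_zero hpr)]
      all_goals ring
    have e4 : (b:ℝ)*((ν:ℝ)+1/2)/p + 1/2 = ((b*u+p : ℤ):ℝ)/((2*(p:ℤ) : ℤ):ℝ) := by
      rw [show ((b*u+p : ℤ):ℝ) = ((b*(2*(ν:ℤ)+1)+p : ℤ):ℝ) by rw [h2u]]
      push_cast
      field_simp
    rw [e1, e2, e3, e4]
    rw [saw_div_congr h2p hd4]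
    have hlast : saw (((2*(μ:ℤ)+1 : ℤ):ℝ)/((2*(p:ℤ) : ℤ):ℝ))
        = saw (((b*u+p : ℤ):ℝ)/((2*(p:ℤ) : ℤ):ℝ)) := by
      refine saw_div_congr h2p ?_
      have : (2*(μ:ℤ)+1) - (b*u+p) = -(b*u+p - (2*(μ:ℤ)+1)) := by ring
      rw [this]
      exact hd5.neg_right
    rw [hlast]
    ring

theorem even_case_key_identity (n : ℕ) (a : Fin (n+1) → ℕ) (b : Fin (n+1) → ℤ)
    (hpos : ∀ i, 0 < a i) (heven : Even (a 0))
    (hcop : ∀ i j, i ≠ j → Nat.Coprime (a i) (a j))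
    (hsum : ∑ i, b i * ∏ j ∈ Finset.univ.erase i, (a j : ℤ) = 1)
    (hodddiff : ∀ i, Odd ((a i : ℤ) - b i)) :
    ∀ i, drSum (∏ j ∈ Finset.univ.erase i, (a j : ℤ)) (a i) (1/2) (1/2)
      + dedekindSum ((a i : ℤ) - b i) (2 * a i)
      + dedekindSum (b i) (a i) = 0 := by
  have hodd_aj : ∀ j : Fin (n+1), j ≠ 0 → Odd (a j) := by
    intro j hj
    rcases Nat.even_or_odd (a j) with he | ho
    · exfalso
      have h2 : 2 ∣ Nat.gcd (a 0) (a j) := Nat.dvd_gcd heven.two_dvd he.two_dvd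
      rw [hcop 0 j (Ne.symm hj)] at h2
      omega
    · exact ho
  intro i
  have hp : a i ≠ 0 := (hpos i).ne'
  set q : ℤ := ∏ j ∈ Finset.univ.erase i, (a j : ℤ) with hqdef
  have hrest : ∑ j ∈ Finset.univ.erase i, (b j * ∏ k ∈ Finset.univ.erase j, (a k : ℤ))
      = 1 - b i * q := by
    have h := Finset.sum_erase_add Finset.univ
      (fun j => b j * ∏ k ∈ Finset.univ.erase j, (a k:ℤ)) (Finset.mem_univ i)
    rw [hsum] at h
    linarith [h]
  by_cases hi : i = 0
  · subst hi
    have heven_int : Even ((a 0 : ℤ)) := by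
      obtain ⟨k, hk⟩ := heven; exact ⟨(k:ℤ), by exact_mod_cast hk⟩
    have hq_odd : Odd q := by
      rw [hqdef]
      refine Finset.prod_induction _ Odd (fun _ _ => Odd.mul) odd_one ?_
      intro j hj
      obtain ⟨k, hk⟩ := hodd_aj j (Finset.mem_erase.mp hj).1
      exact ⟨(k:ℤ), by exact_mod_cast hk⟩
    have hb0_odd : Odd (b 0) := by
      have h0 := hodddiff 0
      obtain ⟨k, hk⟩ := heven_int
      rw [Int.odd_iff] at h0 ⊢
      omega
    have hbq2 : (2*((a 0:ℕ):ℤ)) ∣ b 0 * q - 1 := by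
      have hd : (2*((a 0:ℕ):ℤ)) ∣ ∑ j ∈ Finset.univ.erase (0 : Fin (n+1)),
          (b j * ∏ k ∈ Finset.univ.erase j, (a k : ℤ)) := by
        refine Finset.dvd_sum ?_
        intro j hj
        have hj0 : j ≠ 0 := (Finset.mem_erase.mp hj).1
        have hbj_even : Even (b j) := by
          obtain ⟨k, hk⟩ := hodd_aj j hj0
          have hjodd : Odd ((a j : ℤ)) := ⟨(k:ℤ), by exact_mod_cast hk⟩
          have := hodddiff j
          rw [Int.odd_iff] at this hjodd
          rw [Int.even_iff]
          omega
        obtain ⟨c, hc⟩ := hbj_even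
        obtain ⟨d, hd⟩ := Finset.dvd_prod_of_mem (fun k => ((a k:ℕ):ℤ))
          (show (0:Fin (n+1)) ∈ Finset.univ.erase j from
            Finset.mem_erase.mpr ⟨Ne.symm hj0, Finset.mem_univ _⟩)
        exact ⟨c * d, by rw [hc, hd]; ring⟩
      rw [hrest] at hd
      have := dvd_neg.mpr hd
      rw [neg_sub] at this
      exact this
    have h3 : ∀ t : ℤ, Odd t → Odd (q*t+((a 0:ℕ):ℤ)) :=
      fun t ht => (hq_odd.mul ht).add_even heven_int
    have h4 : ∀ t : ℤ, Odd t → Odd (b 0*t+((a 0:ℕ):ℤ)) :=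
      fun t ht => (hb0_odd.mul ht).add_even heven_int
    have h1 : ∀ t : ℤ, Odd t → (2*((a 0:ℕ):ℤ)) ∣ (b 0*(q*t+((a 0:ℕ):ℤ)) + ((a 0:ℕ):ℤ) - t) := by
      intro t ht
      obtain ⟨c, hc⟩ := hb0_odd
      rw [show b 0*(q*t+((a 0:ℕ):ℤ)) + ((a 0:ℕ):ℤ) - t
          = (b 0 * q - 1)*t + (2*((a 0:ℕ):ℤ))*(c+1) from by rw [hc]; ring]
      exact dvd_add (hbq2.mul_right t) (dvd_mul_right _ _)
    have h2 : ∀ t : ℤ, Odd t → (2*((a 0:ℕ):ℤ)) ∣ (q*(b 0*t+((a 0:ℕ):ℤ)) + ((a 0:ℕ):ℤ) - t) := by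
      intro t ht
      obtain ⟨c, hc⟩ := hq_odd
      rw [show q*(b 0*t+((a 0:ℕ):ℤ)) + ((a 0:ℕ):ℤ) - t
          = (b 0 * q - 1)*t + (2*((a 0:ℕ):ℤ))*(c+1) from by rw [hc]; ring]
      exact dvd_add (hbq2.mul_right t) (dvd_mul_right _ _)
    rw [dedekind_split hp (b 0), drSum_inv hp q (b 0) h3 h4 h1 h2]
    ring
  · have hp_odd : Odd (a i) := hodd_aj i hi
    have hpz : Odd ((a i : ℤ)) := by
      obtain ⟨k, hk⟩ := hp_odd; exact ⟨(k:ℤ), by exact_mod_cast hk⟩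
    have hq_even : Even q := by
      obtain ⟨d, hd⟩ := Finset.dvd_prod_of_mem (fun k => ((a k:ℕ):ℤ))
        (show (0:Fin (n+1)) ∈ Finset.univ.erase i from
          Finset.mem_erase.mpr ⟨Ne.symm hi, Finset.mem_univ _⟩)
      obtain ⟨e, he⟩ := heven
      refine ⟨(e:ℤ)*d, ?_⟩
      rw [hqdef, hd, show ((a 0:ℕ):ℤ) = (e:ℤ) + e from by exact_mod_cast he]
      ring
    have hb_even : Even (b i) := by
      have := hodddiff i
      rw [Int.odd_iff] at this hpz
      rw [Int.even_iff]
      omega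
    have hbq : ((a i:ℕ):ℤ) ∣ b i * q - 1 := by
      have hd : ((a i:ℕ):ℤ) ∣ ∑ j ∈ Finset.univ.erase i,
          (b j * ∏ k ∈ Finset.univ.erase j, (a k : ℤ)) := by
        refine Finset.dvd_sum ?_
        intro j hj
        have hji : j ≠ i := (Finset.mem_erase.mp hj).1
        exact Dvd.dvd.mul_left (Finset.dvd_prod_of_mem (fun k => ((a k:ℕ):ℤ))
          (Finset.mem_erase.mpr ⟨Ne.symm hji, Finset.mem_univ _⟩)) _
      rw [hrest] at hd
      have := dvd_neg.mpr hd
      rw [neg_sub] at this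
      exact this
    have hcop2 : IsCoprime (2:ℤ) ((a i:ℕ):ℤ) := by
      rw [Int.isCoprime_iff_gcd_eq_one]
      have : Int.gcd 2 ((a i:ℕ):ℤ) = Nat.gcd 2 (a i) := by
        simp [Int.gcd]
      rw [this]
      exact Nat.coprime_two_left.mpr hp_odd
    have h3 : ∀ t : ℤ, Odd t → Odd (q*t+((a i:ℕ):ℤ)) :=
      fun t ht => (hq_even.mul_right t).add_odd hpz
    have h4 : ∀ t : ℤ, Odd t → Odd (b i*t+((a i:ℕ):ℤ)) :=
      fun t ht => (hb_even.mul_right t).add_odd hpz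
    have h1 : ∀ t : ℤ, Odd t → (2*((a i:ℕ):ℤ)) ∣ (b i*(q*t+((a i:ℕ):ℤ)) + ((a i:ℕ):ℤ) - t) := by
      intro t ht
      rw [show b i*(q*t+((a i:ℕ):ℤ)) + ((a i:ℕ):ℤ) - t
          = (b i * q - 1)*t + (b i+1)*((a i:ℕ):ℤ) from by ring]
      refine IsCoprime.mul_dvd hcop2 ?_ ?_
      · have o1 : Odd ((b i * q - 1)*t) := ((hb_even.mul_right q).sub_odd odd_one).mul ht
        have o2 : Odd ((b i+1)*((a i:ℕ):ℤ)) := (Even.add_one hb_even).mul hpz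
        exact (o1.add_odd o2).two_dvd
      · exact dvd_add (hbq.mul_right t) (dvd_mul_left _ _)
    have h2 : ∀ t : ℤ, Odd t → (2*((a i:ℕ):ℤ)) ∣ (q*(b i*t+((a i:ℕ):ℤ)) + ((a i:ℕ):ℤ) - t) := by
      intro t ht
      rw [show q*(b i*t+((a i:ℕ):ℤ)) + ((a i:ℕ):ℤ) - t
          = (b i * q - 1)*t + (q+1)*((a i:ℕ):ℤ) from by ring]
      refine IsCoprime.mul_dvd hcop2 ?_ ?_
      · have o1 : Odd ((b i * q - 1)*t) := ((hb_even.mul_right q).sub_odd odd_one).mul ht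
        have o2 : Odd ((q+1)*((a i:ℕ):ℤ)) := (Even.add_one hq_even).mul hpz
        exact (o1.add_odd o2).two_dvd
      · exact dvd_add (hbq.mul_right t) (dvd_mul_left _ _)
    rw [dedekind_split hp (b i), drSum_inv hp q (b i) h3 h4 h1 h2]
    ring
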